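/- Suppose ST = λT, SX = μX for every X ∈ V orthogonal to T, and λμ + ε c² = 0. Then G(X, T, T, Y) = 0 for all X, Y ∈ V. (This is the radial flatness, proved in the converse direction of Theorem 2, of a semi-parallel hypersurface of S^n × ℝ or H^n × ℝ whose shape operator has eigenvalue λ on T and eigenvalue μ on the orthogonal complement of T with λμ = −ε cos²θ.) -/

import Mathlib

open scoped InnerProductSpace

/-- The Gauss quadrilinear form of a hypersurface of `Q^n(ε) × ℝ` with shape operator `S`
and tangential vertical projection `T`: by the Gauss equation it equals `⟨R(X,Y)Z,W⟩`. -/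
noncomputable def gaussForm {V : Type*} [NormedAddCommGroup V] [InnerProductSpace ℝ V]
    (S : V →ₗ[ℝ] V) (T : V) (ε : ℝ) (X Y Z W : V) : ℝ :=
  ε * (⟪X, W⟫_ℝ * ⟪Y, Z⟫_ℝ - ⟪X, Z⟫_ℝ * ⟪Y, W⟫_ℝ
      + ⟪X, T⟫_ℝ * ⟪Z, T⟫_ℝ * ⟪Y, W⟫_ℝ + ⟪Y, T⟫_ℝ * ⟪W, T⟫_ℝ * ⟪X, Z⟫_ℝ
      - ⟪Y, T⟫_ℝ * ⟪Z, T⟫_ℝ * ⟪X, W⟫_ℝ - ⟪X, T⟫_ℝ * ⟪W, T⟫_ℝ * ⟪Y, Z⟫_ℝ)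
    + ⟪S X, W⟫_ℝ * ⟪S Y, Z⟫_ℝ - ⟪S X, Z⟫_ℝ * ⟪S Y, W⟫_ℝ

/-- If `ST = λT`, `SX = μX` for every `X ⊥ T`, and `λμ + ε c² = 0`, then the hypersurface
is radially flat: `G(X,T,T,Y) = 0` for all `X, Y`. -/
theorem radiallyFlat_of_semiParallel_eigen {V : Type*} [NormedAddCommGroup V]
    [InnerProductSpace ℝ V] [FiniteDimensional ℝ V]
    (S : V →ₗ[ℝ] V) (hS : S.IsSymmetric) (T : V) (ε c : ℝ)
    (hε : ε = 1 ∨ ε = -1) (hc : ‖T‖ ^ 2 + c ^ 2 = 1)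
    (lam μ : ℝ) (hT : S T = lam • T)
    (hX : ∀ X : V, ⟪X, T⟫_ℝ = 0 → S X = μ • X)
    (hlm : lam * μ + ε * c ^ 2 = 0) :
    ∀ X Y : V, gaussForm S T ε X T T Y = 0 := by
  intro X Y
  by_cases hT0 : T = 0
  · simp [gaussForm, hT0]
  · have ht0 : (‖T‖ : ℝ) ^ 2 ≠ 0 := pow_ne_zero 2 (norm_ne_zero_iff.mpr hT0)
    have hSX : ∀ Z : V, S Z = μ • Z + ((lam - μ) * (⟪Z, T⟫_ℝ / ‖T‖ ^ 2)) • T := by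
      intro Z
      have h1 : ⟪Z - (⟪Z, T⟫_ℝ / ‖T‖ ^ 2) • T, T⟫_ℝ = 0 := by
        simp [inner_sub_left, real_inner_smul_left, real_inner_self_eq_norm_sq]
        field_simp
        ring
      have h2 := hX _ h1
      rw [map_sub, map_smul, hT, smul_sub] at h2
      have h3 := sub_eq_iff_eq_add.mp h2
      rw [h3]; module
    have hTT : ⟪T, T⟫_ℝ = ‖T‖ ^ 2 := real_inner_self_eq_norm_sq T
    simp only [gaussForm, hSX, hT, inner_add_left, real_inner_smul_left, hTT]
    set t := (‖T‖ : ℝ) ^ 2 with htdef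
    set p := ⟪X, Y⟫_ℝ
    set q := ⟪X, T⟫_ℝ
    set r := ⟪T, Y⟫_ℝ
    have hr : ⟪Y, T⟫_ℝ = r := real_inner_comm T Y
    rw [hr]
    field_simp
    rw [htdef] at hc
    linear_combination (‖T‖ ^ 2 * p - q * r) * hlm - (ε * (‖T‖ ^ 2 * p - q * r)) * hc
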